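/- Let f : A → ℂ be an exponential-polynomial function on a lattice A ≅ ℤ^r, f(λ) = ∑_{χ∈X} χ(λ) P_χ(λ) with distinct unitary-or-not characters χ. Define f^w(λ) = ∑_{χ∈X, |χ|≡1} χ(λ) P_χ(λ) (the sum over characters of absolute value 1). If every χ ∈ X satisfies |χ(λ)| ≤ 1 on the 'negative cone' A⁻ = {λ : ⟨α, λ⟩ ≤ 0 ∀α ∈ Δ} for a finite set Δ of linear functionals spanning, then f(λ) - f^w(λ) → 0 as λ → -∞ in the cone (i.e., ⟨α,λ⟩ → -∞ for all α ∈ Δ with ratios bounded). -/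

import Mathlib

set_option maxHeartbeats 1000000
open Finset Filter Topology Real

-- separation: span = ⊤ implies functionals separate points
lemma sep' {r : ℕ} (Δ : Finset ((Fin r → ℝ) →ₗ[ℝ] ℝ))
    (hspan : Submodule.span ℝ (Δ : Set ((Fin r → ℝ) →ₗ[ℝ] ℝ)) = ⊤) (x : Fin r → ℝ)
    (hx : ∀ α ∈ Δ, α x = 0) : x = 0 := by
  have key : ∀ f : (Fin r → ℝ) →ₗ[ℝ] ℝ, f x = 0 := by
    intro f
    have hf : f ∈ Submodule.span ℝ (Δ : Set ((Fin r → ℝ) →ₗ[ℝ] ℝ)) := by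
      rw [hspan]; trivial
    induction hf using Submodule.span_induction with
    | mem g hg => exact hx g hg
    | zero => simp
    | add g h _ _ hg hh => simp [hg, hh]
    | smul c g _ hg => simp [hg]
  funext i
  simpa using key (LinearMap.proj i)
open Finset

-- rational approximation with common denominator
lemma ratapprox {r : ℕ} (x : Fin r → ℝ) {δ : ℝ} (hδ : 0 < δ) :
    ∃ (n : ℕ) (l : Fin r → ℤ), 0 < n ∧ ∀ i, |x i - (l i : ℝ) / n| < δ := by
  have hq : ∀ i, ∃ q : ℚ, |x i - (q : ℝ)| < δ := fun i => exists_rat_near (x i) hδ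
  choose q hqq using hq
  set n : ℕ := ∏ i, (q i).den with hn
  have hnpos : 0 < n := Finset.prod_pos fun i _ => (q i).den_pos
  have hdvd : ∀ i, ((q i).den : ℤ) ∣ (n : ℤ) := by
    intro i
    exact_mod_cast Int.natCast_dvd_natCast.mpr (Finset.dvd_prod_of_mem _ (mem_univ i))
  refine ⟨n, fun i => (q i).num * ((n : ℤ) / (q i).den), hnpos, fun i => ?_⟩
  have key : ((((q i).num * ((n : ℤ) / (q i).den)) : ℤ) : ℝ) / (n : ℝ) = (q i : ℝ) := by
    have hZ : ((q i).num * ((n : ℤ) / (q i).den)) * (q i).den = (q i).num * n := by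
      rw [mul_assoc, Int.ediv_mul_cancel (hdvd i)]
    have h1 : ((q i).num : ℝ) * (((n : ℤ) / (q i).den : ℤ) : ℝ) * ((q i).den : ℝ)
        = ((q i).num : ℝ) * (n : ℝ) := by exact_mod_cast congrArg (fun z : ℤ => (z : ℝ)) hZ
    have hden : ((q i).den : ℝ) ≠ 0 := by exact_mod_cast (q i).den_pos.ne'
    have hnn : (n : ℝ) ≠ 0 := by exact_mod_cast hnpos.ne'
    rw [Rat.cast_def]
    push_cast
    field_simp
    nlinarith [h1]
  rw [key]
  exact hqq i


lemma normlow {r : ℕ} (Δ : Finset ((Fin r → ℝ) →ₗ[ℝ] ℝ))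
    (hspan : Submodule.span ℝ (Δ : Set ((Fin r → ℝ) →ₗ[ℝ] ℝ)) = ⊤) (hΔ : Δ.Nonempty) :
    ∃ m > (0:ℝ), ∀ x : Fin r → ℝ, m * ‖x‖ ≤ Δ.sup' hΔ (fun α => |α x|) := by
  set Φ : (Fin r → ℝ) →ₗ[ℝ] ({α // α ∈ Δ} → ℝ) :=
    LinearMap.pi (fun α => α.1) with hΦ
  have hinj : Function.Injective Φ := by
    rw [← LinearMap.ker_eq_bot, LinearMap.ker_eq_bot']
    intro x hx
    refine sep' Δ hspan x fun α hα => ?_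
    have := congrFun hx ⟨α, hα⟩
    simpa [hΦ] using this
  let e : (Fin r → ℝ) ≃ₗ[ℝ] LinearMap.range Φ := LinearEquiv.ofInjective Φ hinj
  set g : LinearMap.range Φ →L[ℝ] (Fin r → ℝ) :=
    LinearMap.toContinuousLinearMap (e.symm : LinearMap.range Φ →ₗ[ℝ] (Fin r → ℝ)) with hg
  refine ⟨(‖g‖ + 1)⁻¹, by positivity, fun x => ?_⟩
  have hex : e x = ⟨Φ x, LinearMap.mem_range_self Φ x⟩ :=
    Subtype.ext (LinearEquiv.ofInjective_apply (f := Φ) (h := hinj) x)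
  have hx : x = g ⟨Φ x, LinearMap.mem_range_self Φ x⟩ := by
    rw [← hex]
    show x = e.symm (e x)
    simp
  have h1 : ‖x‖ ≤ (‖g‖ + 1) * ‖Φ x‖ := by
    calc ‖x‖ = ‖g ⟨Φ x, LinearMap.mem_range_self Φ x⟩‖ := by rw [← hx]
    _ ≤ ‖g‖ * ‖(⟨Φ x, LinearMap.mem_range_self Φ x⟩ : LinearMap.range Φ)‖ := g.le_opNorm _
    _ = ‖g‖ * ‖Φ x‖ := rfl
    _ ≤ (‖g‖ + 1) * ‖Φ x‖ := by nlinarith [norm_nonneg (Φ x), norm_nonneg g]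
  have h2 : ‖Φ x‖ ≤ Δ.sup' hΔ (fun α => |α x|) := by
    have h0 : (0:ℝ) ≤ Δ.sup' hΔ (fun α => |α x|) := by
      obtain ⟨α, hα⟩ := hΔ
      exact le_trans (abs_nonneg (α x)) (Finset.le_sup' (fun α => |α x|) hα)
    rw [pi_norm_le_iff_of_nonneg h0]
    intro α
    simpa [hΦ] using (⟨α.1, α.2, le_rfl⟩ : ∃ b ∈ Δ, |α.1 x| ≤ |b x|)
  rw [inv_mul_le_iff₀ (by positivity)]
  calc ‖x‖ ≤ (‖g‖ + 1) * ‖Φ x‖ := h1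
  _ ≤ (‖g‖+1) * Δ.sup' hΔ (fun α => |α x|) := by nlinarith [norm_nonneg g]


lemma cone_nonpos {r : ℕ} (Δ : Finset ((Fin r → ℝ) →ₗ[ℝ] ℝ)) (hΔ : Δ.Nonempty)
    (c : Fin r → ℝ)
    (hc : ∀ l : Fin r → ℤ, (∀ α ∈ Δ, α (fun i => (l i : ℝ)) ≤ 0) → ∑ i, c i * l i ≤ 0)
    (x : Fin r → ℝ) (hx : ∀ α ∈ Δ, α x < 0) : ∑ i, c i * x i ≤ 0 := by
  refine le_of_forall_pos_le_add fun ε hε => ?_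
  set A : ℝ := Δ.sup' hΔ (fun α => ‖LinearMap.toContinuousLinearMap α‖) with hA
  set S : ℝ := ∑ i, |c i| with hS
  have hS0 : 0 ≤ S := Finset.sum_nonneg fun i _ => abs_nonneg _
  set μ : ℝ := Δ.inf' hΔ (fun α => -α x) with hμ
  have hμ0 : 0 < μ := by
    rw [hμ, Finset.lt_inf'_iff]
    intro α hα
    linarith [hx α hα]
  set δ : ℝ := min (ε / (S + 1)) (μ / (2 * (A + 1))) with hδdef
  have hA0 : 0 ≤ A := by
    obtain ⟨α, hα⟩ := hΔ
    exact le_trans (norm_nonneg _) (Finset.le_sup' (fun α => ‖LinearMap.toContinuousLinearMap α‖) hα)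
  have hδ : 0 < δ := lt_min (by positivity) (by positivity)
  obtain ⟨n, l, hn, hl⟩ := ratapprox x hδ
  set q : Fin r → ℝ := fun i => (l i : ℝ) / n with hq
  have hqx : ∀ i, |q i - x i| ≤ δ := fun i => by
    rw [abs_sub_comm]; exact (hl i).le
  have hnorm : ‖q - x‖ ≤ δ := by
    rw [pi_norm_le_iff_of_nonneg hδ.le]
    intro i
    simpa using hqx i
  have hql : ∀ α ∈ Δ, α q < 0 := by
    intro α hα
    have h1 : α q = α x + α (q - x) := by rw [map_sub]; ring
    have h2 : |α (q - x)| ≤ A * δ := by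
      calc |α (q - x)| = ‖LinearMap.toContinuousLinearMap α (q - x)‖ := by
            simp [Real.norm_eq_abs]
      _ ≤ ‖LinearMap.toContinuousLinearMap α‖ * ‖q - x‖ :=
            (LinearMap.toContinuousLinearMap α).le_opNorm _
      _ ≤ A * δ := by
            refine mul_le_mul ?_ hnorm (norm_nonneg _) hA0
            exact Finset.le_sup' (fun α => ‖LinearMap.toContinuousLinearMap α‖) hα
    have h3 : α x ≤ -μ := by
      have := Finset.inf'_le (fun α => -α x) hα
      rw [← hμ] at this; linarith
    have h4 : A * δ < μ := by
      have h4a : δ ≤ μ / (2 * (A + 1)) := min_le_right _ _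
      have h4b : (A + 1) * δ ≤ (A + 1) * (μ / (2 * (A + 1))) :=
        mul_le_mul_of_nonneg_left h4a (by linarith)
      have h4c : (A + 1) * (μ / (2 * (A + 1))) = μ / 2 := by field_simp
      nlinarith
    have := abs_le.mp h2
    linarith
  have hlc : ∀ α ∈ Δ, α (fun i => (l i : ℝ)) ≤ 0 := by
    intro α hα
    have heq : (fun i => (l i : ℝ)) = (n : ℝ) • q := by
      funext i
      rw [hq]
      simp only [Pi.smul_apply, smul_eq_mul]
      have hn0 : (n:ℝ) ≠ 0 := by positivity
      field_simp
    rw [heq, map_smul]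
    have h8 := (hql α hα).le
    have hn' : (0:ℝ) ≤ n := by positivity
    simp only [smul_eq_mul]
    exact mul_nonpos_of_nonneg_of_nonpos hn' h8
  have hsum : ∑ i, c i * l i ≤ 0 := hc l hlc
  have hsumq : ∑ i, c i * q i ≤ 0 := by
    have heq : ∑ i, c i * q i = (∑ i, c i * l i) / n := by
      rw [Finset.sum_div]
      congr 1; funext i
      rw [hq]; ring
    rw [heq]
    exact div_nonpos_of_nonpos_of_nonneg hsum (by positivity)
  have h6 : ∀ i ∈ Finset.univ (α := Fin r), c i * x i - c i * q i ≤ |c i| * δ := by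
    intro i _
    calc c i * x i - c i * q i = c i * (x i - q i) := by ring
    _ ≤ |c i * (x i - q i)| := le_abs_self _
    _ = |c i| * |x i - q i| := abs_mul _ _
    _ ≤ |c i| * δ := by
        refine mul_le_mul_of_nonneg_left ?_ (abs_nonneg _)
        rw [abs_sub_comm]; exact hqx i
  have h7 : ∑ i, (c i * x i - c i * q i) ≤ S * δ := by
    rw [hS, Finset.sum_mul]
    exact Finset.sum_le_sum h6
  rw [Finset.sum_sub_distrib] at h7
  have hδε : S * δ ≤ ε := by
    have h9 : δ ≤ ε / (S + 1) := min_le_left _ _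
    have h10 : S * δ ≤ S * (ε / (S + 1)) := mul_le_mul_of_nonneg_left h9 hS0
    have h11 : S * (ε / (S + 1)) ≤ ε := by
      rw [div_eq_inv_mul, ← mul_assoc]
      have : S * (S + 1)⁻¹ ≤ 1 := by
        rw [mul_inv_le_iff₀ (by linarith)]; linarith
      nlinarith
    linarith
  linarith


lemma strict_neg {r : ℕ} (Δ : Finset ((Fin r → ℝ) →ₗ[ℝ] ℝ)) (hΔ : Δ.Nonempty)
    (c : Fin r → ℝ) (hc0 : c ≠ 0)
    (hc : ∀ l : Fin r → ℤ, (∀ α ∈ Δ, α (fun i => (l i : ℝ)) ≤ 0) → ∑ i, c i * l i ≤ 0)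
    {η' : ℝ} (hη' : 0 < η') :
    ∃ δ > (0:ℝ), ∀ x : Fin r → ℝ, (∀ α ∈ Δ, α x ≤ -η') → ∑ i, c i * x i ≤ -δ := by
  set B : ℝ := Δ.sup' hΔ (fun α => |α c|) with hB
  have hB0 : 0 ≤ B := by
    obtain ⟨α, hα⟩ := hΔ
    exact le_trans (abs_nonneg _) (Finset.le_sup' (fun α => |α c|) hα)
  set t : ℝ := η' / (2 * (B + 1)) with ht
  have ht0 : 0 < t := by positivity
  have hcsq : 0 < ∑ i, (c i) ^ 2 := by
    obtain ⟨i0, hi0⟩ := Function.ne_iff.mp hc0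
    refine Finset.sum_pos' (fun i _ => sq_nonneg _) ⟨i0, Finset.mem_univ _, ?_⟩
    have hne : c i0 ≠ 0 := by simpa using hi0
    positivity
  refine ⟨t * ∑ i, (c i) ^ 2, by positivity, fun x hx => ?_⟩
  have hy : ∀ α ∈ Δ, α (x + t • c) < 0 := by
    intro α hα
    have h1 : α (x + t • c) = α x + t * α c := by
      rw [map_add, map_smul, smul_eq_mul]
    have h2 : |α c| ≤ B := Finset.le_sup' (fun α => |α c|) hα
    have h3 : t * α c ≤ t * (B + 1) := by
      have h2' := (abs_le.mp h2).2
      nlinarith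
    have h4 : t * (B + 1) = η' / 2 := by rw [ht]; field_simp
    have h5 := hx α hα
    rw [h1]
    linarith
  have := cone_nonpos Δ hΔ c hc (x + t • c) hy
  have hexp : ∑ i, c i * (x + t • c) i = ∑ i, c i * x i + t * ∑ i, (c i) ^ 2 := by
    rw [Finset.mul_sum, ← Finset.sum_add_distrib]
    congr 1; funext i
    simp only [Pi.add_apply, Pi.smul_apply, smul_eq_mul]
    ring
  rw [hexp] at this
  linarith


-- polynomial growth bound
lemma polybound {r : ℕ} (P : MvPolynomial (Fin r) ℂ) :
    ∃ C ≥ (0:ℝ), ∀ (B : ℝ), 0 ≤ B → ∀ x : Fin r → ℂ, (∀ i, ‖x i‖ ≤ B) →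
      ‖MvPolynomial.eval x P‖ ≤ C * (1 + B) ^ P.totalDegree := by
  refine ⟨∑ e ∈ P.support, ‖MvPolynomial.coeff e P‖,
    Finset.sum_nonneg fun e _ => norm_nonneg _, fun B hB x hx => ?_⟩
  rw [MvPolynomial.eval_eq', Finset.sum_mul]
  refine le_trans (norm_sum_le _ _) (Finset.sum_le_sum fun e he => ?_)
  rw [norm_mul]
  refine mul_le_mul_of_nonneg_left ?_ (norm_nonneg _)
  rw [norm_prod]
  calc ∏ i, ‖x i ^ e i‖
      ≤ ∏ i, (1 + B) ^ e i := by
        refine Finset.prod_le_prod (fun i _ => norm_nonneg _) fun i _ => ?_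
        rw [norm_pow]
        exact pow_le_pow_left₀ (norm_nonneg _) (by linarith [hx i]) _
    _ = (1 + B) ^ (∑ i, e i) := by rw [Finset.prod_pow_eq_pow_sum]
    _ ≤ (1 + B) ^ P.totalDegree := by
        refine pow_le_pow_right₀ (by linarith) ?_
        have h1 : (∑ i, e i) = e.sum fun _ n => n := by
          rw [Finsupp.sum_fintype]; intro; rfl
        rw [h1]
        exact MvPolynomial.le_totalDegree he

-- character absolute value
lemma charabs {r : ℕ} (z : Fin r → ℂˣ) (l : Fin r → ℤ) :
    ‖((∏ i, z i ^ l i : ℂˣ) : ℂ)‖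
      = Real.exp (∑ i, Real.log ‖(z i : ℂ)‖ * l i) := by
  have h1 : ((∏ i, z i ^ l i : ℂˣ) : ℂ) = ∏ i, ((z i : ℂ) ^ l i) := by
    rw [← Units.coeHom_apply, map_prod]
    congr 1; funext i
    exact Units.val_zpow_eq_zpow_val (z i) (l i)
  rw [h1, norm_prod, Real.exp_sum]
  congr 1; funext i
  rw [norm_zpow]
  have hz : 0 < ‖(z i : ℂ)‖ := by
    simpa using (z i).ne_zero
  rw [← Real.rpow_intCast, Real.rpow_def_of_pos hz]


lemma decay {C δ : ℝ} (hC : 0 ≤ C) (hδ : 0 < δ) (d : ℕ) {ε' : ℝ} (hε' : 0 < ε') :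
    ∃ T > (0:ℝ), ∀ t ≥ T, C * (1 + t) ^ d * Real.exp (-δ * t) < ε' := by
  have h0 : Tendsto (fun s : ℝ => s ^ d * Real.exp (-s)) atTop (𝓝 0) :=
    tendsto_pow_mul_exp_neg_atTop_nhds_zero d
  have h1 : Tendsto (fun t : ℝ => δ * (1 + t)) atTop atTop := by
    apply Tendsto.const_mul_atTop hδ
    exact tendsto_atTop_add_const_left atTop 1 tendsto_id
  set K : ℝ := C * Real.exp δ / δ ^ d with hK
  have h2 : Tendsto (fun t : ℝ => K * ((δ * (1 + t)) ^ d * Real.exp (-(δ * (1 + t)))))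
      atTop (𝓝 (K * 0)) := (h0.comp h1).const_mul K
  rw [mul_zero] at h2
  have h3 := h2.eventually_lt_const hε'
  have heq : ∀ t : ℝ, K * ((δ * (1 + t)) ^ d * Real.exp (-(δ * (1 + t))))
      = C * (1 + t) ^ d * Real.exp (-δ * t) := by
    intro t
    have e1 : Real.exp (-(δ * (1 + t))) = (Real.exp δ)⁻¹ * Real.exp (-δ * t) := by
      rw [← Real.exp_neg, ← Real.exp_add]
      ring_nf
    rw [hK, e1, mul_pow]
    have hδd : δ ^ d ≠ 0 := (pow_pos hδ d).ne'
    field_simp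
  rw [eventually_atTop] at h3
  obtain ⟨T, hT⟩ := h3
  refine ⟨max T 1, lt_of_lt_of_le one_pos (le_max_right _ _), fun t ht => ?_⟩
  have := hT t (le_trans (le_max_left _ _) ht)
  rwa [heq] at this


lemma keyz {r : ℕ} (Δ : Finset ((Fin r → ℝ) →ₗ[ℝ] ℝ)) (hΔ : Δ.Nonempty)
    (hspan : Submodule.span ℝ (Δ : Set ((Fin r → ℝ) →ₗ[ℝ] ℝ)) = ⊤)
    {η : ℝ} (hη : 0 < η) (z : Fin r → ℂˣ) (Q : MvPolynomial (Fin r) ℂ)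
    (hzb : ∀ l : Fin r → ℤ, (∀ α ∈ Δ, α (fun i => (l i : ℝ)) ≤ 0) →
      ‖((∏ i, z i ^ l i : ℂˣ) : ℂ)‖ ≤ 1)
    (hz1 : ∃ i, ‖(z i : ℂ)‖ ≠ 1)
    {ε' : ℝ} (hε' : 0 < ε') :
    ∃ R > (0:ℝ), ∀ l : Fin r → ℤ,
      (∀ α ∈ Δ, α (fun i => (l i : ℝ)) < -R) →
      (∀ α ∈ Δ, ∀ β ∈ Δ, α (fun i => (l i : ℝ)) < η * β (fun i => (l i : ℝ))) →
      ‖((∏ i, z i ^ l i : ℂˣ) : ℂ) *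
        MvPolynomial.eval (fun i => (l i : ℂ)) Q‖ < ε' := by
  classical
  set c : Fin r → ℝ := fun i => Real.log ‖(z i : ℂ)‖ with hcdef
  have hc0 : c ≠ 0 := by
    obtain ⟨i, hi⟩ := hz1
    intro hcz
    have hzi : ‖(z i : ℂ)‖ ≠ 0 := by
      simpa using (z i).ne_zero
    have : c i = 0 := by rw [hcz]; rfl
    rcases Real.log_eq_zero.mp this with h | h | h
    · exact hzi h
    · exact hi h
    · have hnn := norm_nonneg ((z i : ℂ))
      linarith [hnn, h.le, h.ge]
  have hc : ∀ l : Fin r → ℤ, (∀ α ∈ Δ, α (fun i => (l i : ℝ)) ≤ 0) →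
      ∑ i, c i * l i ≤ 0 := by
    intro l hl
    have := hzb l hl
    rw [charabs] at this
    exact Real.exp_le_one_iff.mp this
  obtain ⟨m, hm, hmlow⟩ := normlow Δ hspan hΔ
  obtain ⟨δ, hδ, hδle⟩ := strict_neg Δ hΔ c hc0 hc (mul_pos hη hm)
  obtain ⟨C, hC, hCle⟩ := polybound Q
  set A : ℝ := Δ.sup' hΔ (fun α => ‖LinearMap.toContinuousLinearMap α‖) + 1 with hA
  have hA1 : 1 ≤ A := by
    rw [hA]
    obtain ⟨α, hα⟩ := hΔ
    have := le_trans (norm_nonneg (LinearMap.toContinuousLinearMap α))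
      (Finset.le_sup' (fun α => ‖LinearMap.toContinuousLinearMap α‖) hα)
    linarith
  obtain ⟨T, hT, hTle⟩ := decay hC hδ Q.totalDegree hε'
  refine ⟨A * (T + 1), by nlinarith, fun l h1 h2 => ?_⟩
  obtain ⟨β₀, hβ₀Δ, hβ₀min⟩ := Δ.exists_min_image (fun β => β (fun i => (l i : ℝ))) hΔ
  set L : Fin r → ℝ := fun i => (l i : ℝ) with hL
  set M : ℝ := -β₀ L with hM
  have hMR : A * (T + 1) < M := by
    have := h1 β₀ hβ₀Δ
    rw [hM]; linarith
  have hM0 : 0 < M := lt_trans (by nlinarith) hMR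
  have hαM : ∀ α ∈ Δ, α L < -(η * M) := by
    intro α hα
    have := h2 α hα β₀ hβ₀Δ
    rw [hM] at *
    nlinarith
  have hαabs : ∀ α ∈ Δ, |α L| ≤ M := by
    intro α hα
    rw [abs_le]
    constructor
    · have := hβ₀min α hα
      rw [hM]; linarith
    · have := hαM α hα
      nlinarith [mul_pos hη hM0]
  set t : ℝ := ‖L‖ with ht
  have htnn : 0 ≤ t := norm_nonneg _
  have htM : m * t ≤ M := by
    refine le_trans (hmlow L) ?_
    exact Finset.sup'_le hΔ _ hαabs
  have hMt : M ≤ A * t := by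
    have hb : |β₀ L| ≤ ‖LinearMap.toContinuousLinearMap β₀‖ * t := by
      have := (LinearMap.toContinuousLinearMap β₀).le_opNorm L
      simpa [Real.norm_eq_abs] using this
    have hble : ‖LinearMap.toContinuousLinearMap β₀‖ ≤ A - 1 := by
      rw [hA]
      simpa using (⟨β₀, hβ₀Δ, le_rfl⟩ : ∃ b ∈ Δ, ‖LinearMap.toContinuousLinearMap β₀‖ ≤ ‖LinearMap.toContinuousLinearMap b‖)
    have : |β₀ L| ≤ (A - 1) * t := le_trans hb (mul_le_mul_of_nonneg_right hble htnn)
    have hMb : M ≤ |β₀ L| := by rw [hM]; exact neg_le_abs _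
    nlinarith
  have htpos : 0 < t := by nlinarith
  have htT : T ≤ t := by
    have h5 : A * (T + 1) < A * t := lt_of_lt_of_le hMR hMt
    have := (mul_lt_mul_iff_right₀ (by linarith : (0:ℝ) < A)).mp h5
    linarith
  -- x := t⁻¹ • L satisfies α x ≤ -(η*m)
  have hxcone : ∀ α ∈ Δ, α (t⁻¹ • L) ≤ -(η * m) := by
    intro α hα
    rw [map_smul, smul_eq_mul]
    have h6 := hαM α hα
    have h7 : t⁻¹ * α L ≤ t⁻¹ * (-(η * M)) :=
      mul_le_mul_of_nonneg_left h6.le (inv_nonneg.mpr htnn)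
    have h8 : t⁻¹ * (-(η * M)) ≤ -(η * m) := by
      have h9 : m ≤ M / t := (le_div_iff₀ htpos).mpr htM
      have h10 : η * m ≤ η * (M / t) := mul_le_mul_of_nonneg_left h9 hη.le
      have h11 : t⁻¹ * (-(η * M)) = -(η * (M / t)) := by field_simp
      rw [h11]
      linarith
    linarith
  have hsum := hδle (t⁻¹ • L) hxcone
  have hsum2 : ∑ i, c i * L i ≤ -δ * t := by
    have he : ∑ i, c i * (t⁻¹ • L) i = t⁻¹ * ∑ i, c i * L i := by
      rw [Finset.mul_sum]
      congr 1; funext i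
      simp only [Pi.smul_apply, smul_eq_mul]
      ring
    rw [he] at hsum
    have h12 := mul_le_mul_of_nonneg_left hsum htnn
    rw [← mul_assoc, mul_inv_cancel₀ htpos.ne', one_mul] at h12
    linarith
  have hchar : ‖((∏ i, z i ^ l i : ℂˣ) : ℂ)‖ ≤ Real.exp (-δ * t) := by
    rw [charabs]
    exact Real.exp_le_exp.mpr hsum2
  have heval : ‖MvPolynomial.eval (fun i => (l i : ℂ)) Q‖
      ≤ C * (1 + t) ^ Q.totalDegree := by
    refine hCle t htnn _ fun i => ?_
    have h13 : ‖(l i : ℂ)‖ = |L i| := by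
      show ‖(l i : ℂ)‖ = |((l i : ℤ) : ℝ)|
      exact_mod_cast Complex.norm_intCast (l i)
    rw [h13]
    have := norm_le_pi_norm L i
    simpa [Real.norm_eq_abs] using this
  calc ‖((∏ i, z i ^ l i : ℂˣ) : ℂ) *
        MvPolynomial.eval (fun i => (l i : ℂ)) Q‖
      = ‖((∏ i, z i ^ l i : ℂˣ) : ℂ)‖ *
        ‖MvPolynomial.eval (fun i => (l i : ℂ)) Q‖ := norm_mul _ _
    _ ≤ Real.exp (-δ * t) * (C * (1 + t) ^ Q.totalDegree) := by
        refine mul_le_mul hchar heval (norm_nonneg _) (Real.exp_nonneg _)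
    _ = C * (1 + t) ^ Q.totalDegree * Real.exp (-δ * t) := by ring
    _ < ε' := hTle t htT

/-- Existence of the weak constant term for exponential polynomials: let
`f(λ) = ∑_{z ∈ X} χ_z(λ) P_z(λ)` on the lattice `ℤ^r`, with `χ_z(λ) = ∏ i, z_i^{λ_i}`,
and let `f^w` be the partial sum over the characters of absolute value `1`
(collected in `Xw`). If every character `χ_z`, `z ∈ X`, satisfies `|χ_z(λ)| ≤ 1` on the
cone `{λ : ⟨α, λ⟩ ≤ 0 ∀ α ∈ Δ}` for a finite spanning set `Δ` of linear functionals, then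
`f(λ) - f^w(λ) → 0` as `λ → -∞` in the cone (in the sense of the displayed quantifiers). -/
theorem stmt19 {r : ℕ} (X : Finset (Fin r → ℂˣ))
    (P : (Fin r → ℂˣ) → MvPolynomial (Fin r) ℂ)
    (Xw : Finset (Fin r → ℂˣ))
    (hXw : ∀ z, z ∈ Xw ↔ z ∈ X ∧ ∀ i, Norm.norm (z i : ℂ) = 1)
    (Δ : Finset ((Fin r → ℝ) →ₗ[ℝ] ℝ))
    (hspan : Submodule.span ℝ (Δ : Set ((Fin r → ℝ) →ₗ[ℝ] ℝ)) = ⊤)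
    (hbound : ∀ z ∈ X, ∀ l : Fin r → ℤ,
      (∀ α ∈ Δ, α (fun i => (l i : ℝ)) ≤ 0) →
      Norm.norm ((∏ i, z i ^ l i : ℂˣ) : ℂ) ≤ 1) :
    ∀ ε > (0 : ℝ), ∀ η > (0 : ℝ), ∃ R > (0 : ℝ), ∀ l : Fin r → ℤ,
      (∀ α ∈ Δ, α (fun i => (l i : ℝ)) < -R) →
      (∀ α ∈ Δ, ∀ β ∈ Δ, α (fun i => (l i : ℝ)) < η * β (fun i => (l i : ℝ))) →
      Norm.norm
        ((∑ z ∈ X, ((∏ i, z i ^ l i : ℂˣ) : ℂ) *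
            MvPolynomial.eval (fun i => (l i : ℂ)) (P z)) -
          ∑ z ∈ Xw, ((∏ i, z i ^ l i : ℂˣ) : ℂ) *
            MvPolynomial.eval (fun i => (l i : ℂ)) (P z)) < ε := by
  classical
  intro ε hε η hη
  have hXwX : Xw ⊆ X := fun z hz => ((hXw z).mp hz).1
  by_cases hD : (X \ Xw).Nonempty
  · -- nontrivial case
    have hΔ : Δ.Nonempty := by
      rw [Finset.nonempty_iff_ne_empty]
      intro hΔe
      obtain ⟨z, hz⟩ := hD
      rw [Finset.mem_sdiff] at hz
      have hnz := hz.2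
      rw [hXw] at hnz
      push_neg at hnz
      obtain ⟨i, _⟩ := hnz hz.1
      have h0 := sep' Δ hspan (Pi.single i 1) (by
        intro α hα
        rw [hΔe] at hα
        exact absurd hα (Finset.notMem_empty α))
      have := congrFun h0 i
      simp at this
    set ε' : ℝ := ε / (X \ Xw).card with hε'def
    have hcard : 0 < (X \ Xw).card := Finset.card_pos.mpr hD
    have hε' : 0 < ε' := by
      rw [hε'def]
      positivity
    have key : ∀ z ∈ X \ Xw, ∃ R > (0:ℝ), ∀ l : Fin r → ℤ,
        (∀ α ∈ Δ, α (fun i => (l i : ℝ)) < -R) →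
        (∀ α ∈ Δ, ∀ β ∈ Δ, α (fun i => (l i : ℝ)) < η * β (fun i => (l i : ℝ))) →
        ‖((∏ i, z i ^ l i : ℂˣ) : ℂ) *
          MvPolynomial.eval (fun i => (l i : ℂ)) (P z)‖ < ε' := by
      intro z hz
      rw [Finset.mem_sdiff] at hz
      have hnz := hz.2
      rw [hXw] at hnz
      push_neg at hnz
      obtain ⟨i, hi⟩ := hnz hz.1
      exact keyz Δ hΔ hspan hη z (P z) (hbound z hz.1) ⟨i, hi⟩ hε'
    choose! R hR hRlt using key
    refine ⟨(X \ Xw).sup' hD R, ?_, fun l h1 h2 => ?_⟩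
    · rw [gt_iff_lt, Finset.lt_sup'_iff]
      obtain ⟨z, hz⟩ := hD
      exact ⟨z, hz, hR z hz⟩
    · rw [← Finset.sum_sdiff_eq_sub hXwX]
      have hterm : ∀ z ∈ X \ Xw,
          ‖((∏ i, z i ^ l i : ℂˣ) : ℂ) *
            MvPolynomial.eval (fun i => (l i : ℂ)) (P z)‖ < ε' := by
        intro z hz
        refine hRlt z hz l (fun α hα => ?_) h2
        have hle : R z ≤ (X \ Xw).sup' hD R := Finset.le_sup' R hz
        have := h1 α hα
        linarith
      calc ‖∑ z ∈ X \ Xw, ((∏ i, z i ^ l i : ℂˣ) : ℂ) *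
            MvPolynomial.eval (fun i => (l i : ℂ)) (P z)‖
          ≤ ∑ z ∈ X \ Xw, ‖((∏ i, z i ^ l i : ℂˣ) : ℂ) *
            MvPolynomial.eval (fun i => (l i : ℂ)) (P z)‖ :=
            norm_sum_le _ _
        _ < ∑ _z ∈ X \ Xw, ε' := Finset.sum_lt_sum_of_nonempty hD hterm
        _ = ε := by
            rw [Finset.sum_const, nsmul_eq_mul, hε'def]
            field_simp
  · -- X \ Xw empty
    refine ⟨1, one_pos, fun l _ _ => ?_⟩
    rw [← Finset.sum_sdiff_eq_sub hXwX,
      Finset.not_nonempty_iff_eq_empty.mp hD, Finset.sum_empty]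
    simpa using hε
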